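/- Let G be a locally compact, second countable group whose topology is generated by a left invariant metric δ such that U = B_δ(e,1) is relatively compact and G = ⋃_{k≥1} U^k. Then G admits a left invariant metric d generating the topology of G with B_d(e,1) = U and B_d(e,n) ⊆ U^{2n−1} for all n ∈ ℕ; moreover d is proper. -/

import Mathlib

open Pointwise


/-- Merging lemma: a list with small total weight multiplies into a small element. -/
theorem stmt7_mergeA {G : Type*} [Group G] (δ : G → G → ℝ) (w : G → ℝ)
    (hδ1 : δ 1 1 = 0)
    (hwnn : ∀ g, 0 ≤ w g)
    (hδmul : ∀ g h : G, δ (g * h) 1 ≤ δ g 1 + δ h 1)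
    (hsmall : ∀ g : G, (w g < 1 ∨ δ g 1 < 1) → w g = δ g 1) :
    ∀ L : List G, (L.map w).sum < 1 → δ L.prod 1 ≤ (L.map w).sum
  | [] => fun _ => by simpa using hδ1.le
  | [g] => fun h => by
      simp only [List.map_cons, List.map_nil, List.sum_cons, List.sum_nil, add_zero,
        List.prod_cons, List.prod_nil, mul_one] at h ⊢
      exact (hsmall g (Or.inl h)).symm.le
  | g :: h :: t => fun hs => by
      have hsum : w g + (w h + ((t.map w).sum)) < 1 := by simpa using hs
      have htnn : 0 ≤ (t.map w).sum :=
        List.sum_nonneg (by rintro x hx; rcases List.mem_map.1 hx with ⟨y, -, rfl⟩; exact hwnn y)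
      have hgh : w g + w h < 1 := by linarith
      have hg1 : w g = δ g 1 := hsmall g (Or.inl (by linarith [hwnn h]))
      have hh1 : w h = δ h 1 := hsmall h (Or.inl (by linarith [hwnn g]))
      have hδgh : δ (g * h) 1 ≤ w g + w h := by
        calc δ (g * h) 1 ≤ δ g 1 + δ h 1 := hδmul g h
        _ = w g + w h := by rw [hg1, hh1]
      have hwgh : w (g * h) ≤ w g + w h := by
        rw [hsmall (g * h) (Or.inr (lt_of_le_of_lt hδgh hgh))]; exact hδgh
      have hs' : (((g * h) :: t).map w).sum < 1 := by
        simp only [List.map_cons, List.sum_cons]; linarith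
      have := stmt7_mergeA δ w hδ1 hwnn hδmul hsmall ((g * h) :: t) hs'
      simp only [List.prod_cons, List.map_cons, List.sum_cons] at this ⊢
      rw [← mul_assoc]
      linarith

/-- Chain-reduction lemma: a weighted list of elements of `U` with total weight `< n`
multiplies into `U ^ (2n-1)`. -/
theorem stmt7_mergeC {G : Type*} [Group G] (δ : G → G → ℝ) (U : Set G)
    (h1U : (1 : G) ∈ U)
    (hUiff : ∀ g : G, g ∈ U ↔ δ g 1 < 1)
    (hδmul : ∀ g h : G, δ (g * h) 1 ≤ δ g 1 + δ h 1) :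
    ∀ (P : List (G × ℝ)) (n : ℕ), 1 ≤ n →
      (∀ p ∈ P, p.1 ∈ U ∧ δ p.1 1 ≤ p.2 ∧ 0 ≤ p.2) →
      (P.map Prod.snd).sum < (n : ℝ) →
      (P.map Prod.fst).prod ∈ U ^ (2 * n - 1)
  | [], n, hn, _, _ => by
      have h1 : (1 : G) ∈ U ^ 0 := by simp [Set.mem_one]
      simpa using Set.pow_subset_pow_right h1U (Nat.zero_le _) h1
  | [p], n, hn, hP, _ => by
      have : p.1 ∈ U ^ 1 := by simpa using (hP p (by simp)).1
      simpa using Set.pow_subset_pow_right h1U (by omega : 1 ≤ 2 * n - 1) this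
  | p :: q :: R, n, hn, hP, hs => by
      have hRnn : 0 ≤ (R.map Prod.snd).sum :=
        List.sum_nonneg (by
          rintro x hx; rcases List.mem_map.1 hx with ⟨y, hy, rfl⟩
          exact (hP y (by simp [hy])).2.2)
      have hp := hP p (by simp)
      have hq := hP q (by simp)
      have hsum : p.2 + (q.2 + (R.map Prod.snd).sum) < (n : ℝ) := by simpa using hs
      by_cases hpq : p.2 + q.2 < 1
      · -- merge the first two entries
        have hδ : δ (p.1 * q.1) 1 ≤ p.2 + q.2 :=
          le_trans (hδmul p.1 q.1) (add_le_add hp.2.1 hq.2.1)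
        have hmem : p.1 * q.1 ∈ U := (hUiff _).2 (lt_of_le_of_lt hδ hpq)
        have hP' : ∀ r ∈ ((p.1 * q.1, p.2 + q.2) :: R), r.1 ∈ U ∧ δ r.1 1 ≤ r.2 ∧ 0 ≤ r.2 := by
          rintro r hr
          rcases List.mem_cons.1 hr with rfl | hr
          · exact ⟨hmem, hδ, add_nonneg hp.2.2 hq.2.2⟩
          · exact hP r (by simp [hr])
        have hs' : (((p.1 * q.1, p.2 + q.2) :: R).map Prod.snd).sum < (n : ℝ) := by
          simp only [List.map_cons, List.sum_cons]; linarith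
        have := stmt7_mergeC δ U h1U hUiff hδmul ((p.1 * q.1, p.2 + q.2) :: R) n hn hP' hs'
        simpa [List.prod_cons, mul_assoc] using this
      · -- drop the first two entries, decrease n
        push_neg at hpq
        have hn2 : 2 ≤ n := by
          by_contra hcon
          have : n = 1 := by omega
          subst this; push_cast at hsum; linarith
        have hs' : (R.map Prod.snd).sum < ((n - 1 : ℕ) : ℝ) := by
          have : ((n - 1 : ℕ) : ℝ) = (n : ℝ) - 1 := by
            have : (1 : ℕ) ≤ n := hn
            push_cast [Nat.cast_sub this]; ring
          rw [this]; linarith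
        have hR := stmt7_mergeC δ U h1U hUiff hδmul R (n - 1) (by omega)
          (fun r hr => hP r (by simp [hr])) hs'
        have key : (2 * n - 1) = (2 * (n - 1) - 1) + 1 + 1 := by omega
        rw [key, pow_succ', pow_succ']
        simp only [List.map_cons, List.prod_cons]
        exact Set.mul_mem_mul hp.1 (Set.mul_mem_mul hq.1 hR)
termination_by P => P.length


/-- Expansion: replace each list entry by a weighted list of elements of `U`. -/
theorem stmt7_expand {G : Type*} [Group G] (δ : G → G → ℝ) (U : Set G) (w : G → ℝ)
    (hδnn : ∀ g : G, 0 ≤ δ g 1)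
    (hUiff : ∀ g : G, g ∈ U ↔ δ g 1 < 1)
    (hwU : ∀ g ∈ U, w g = δ g 1)
    (hsplit : ∀ g : G, g ∉ U → ∃ M : List G, (∀ x ∈ M, x ∈ U) ∧ M.prod = g ∧
      ((M.length : ℝ) ≤ w g)) :
    ∀ L : List G, ∃ P : List (G × ℝ),
      (∀ p ∈ P, p.1 ∈ U ∧ δ p.1 1 ≤ p.2 ∧ 0 ≤ p.2) ∧
      (P.map Prod.fst).prod = L.prod ∧ (P.map Prod.snd).sum ≤ (L.map w).sum := by
  intro L
  induction L with
  | nil => exact ⟨[], by simp, by simp, by simp⟩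
  | cons g t ih =>
    obtain ⟨Q, hQ, hQp, hQs⟩ := ih
    by_cases hg : g ∈ U
    · refine ⟨(g, w g) :: Q, ?_, ?_, ?_⟩
      · rintro p hp
        rcases List.mem_cons.1 hp with rfl | hp
        · exact ⟨hg, (hwU g hg).ge, (hwU g hg) ▸ hδnn g⟩
        · exact hQ p hp
      · simp [hQp]
      · simp only [List.map_cons, List.sum_cons]; linarith
    · obtain ⟨M, hM, hMp, hMl⟩ := hsplit g hg
      refine ⟨(M.map fun u => (u, (1 : ℝ))) ++ Q, ?_, ?_, ?_⟩
      · rintro p hp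
        rcases List.mem_append.1 hp with hp | hp
        · rcases List.mem_map.1 hp with ⟨u, hu, rfl⟩
          exact ⟨hM u hu, ((hUiff u).1 (hM u hu)).le, zero_le_one⟩
        · exact hQ p hp
      · simp only [List.map_append, List.map_map, List.prod_append]
        have : (Prod.fst ∘ fun u : G => (u, (1 : ℝ))) = id := rfl
        simp [this, hMp, hQp]
      · simp only [List.map_append, List.map_map, List.sum_append, List.map_cons, List.sum_cons]
        have : (Prod.snd ∘ fun u : G => (u, (1 : ℝ))) = fun _ => (1 : ℝ) := rfl
        rw [this]
        have hms : (M.map fun _ : G => (1 : ℝ)).sum = (M.length : ℝ) := by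
          simp [List.map_const', List.sum_replicate, nsmul_eq_mul]
        rw [hms]
        linarith

/-- If the topology of a locally compact second countable group `G` is generated
by a left invariant metric `δ` with `U = B_δ(e,1)` relatively compact and
`G = ⋃_{k ≥ 1} U^k`, then `G` admits a left invariant metric `d` generating the
topology with `B_d(e,1) = U` and `B_d(e,n) ⊆ U^{2n−1}` for all `n`; moreover `d`
is proper. -/
theorem stmt7 {G : Type*} [Group G] [TopologicalSpace G] [IsTopologicalGroup G]
    [LocallyCompactSpace G] [SecondCountableTopology G]
    (δ : G → G → ℝ)
    (h0 : ∀ x y : G, δ x y = 0 ↔ x = y)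
    (hsymm : ∀ x y : G, δ x y = δ y x)
    (htri : ∀ x y z : G, δ x z ≤ δ x y + δ y z)
    (hinv : ∀ g x y : G, δ (g * x) (g * y) = δ x y)
    (hgen : ∀ s : Set G, IsOpen s ↔ ∀ x ∈ s, ∃ ε > 0, {y : G | δ y x < ε} ⊆ s)
    (U : Set G) (hU : U = {x : G | δ x 1 < 1})
    (hUcpt : IsCompact (closure U))
    (hUgen : ∀ g : G, ∃ k : ℕ, 1 ≤ k ∧ g ∈ U ^ k) :
    ∃ d : G → G → ℝ,
      (∀ x y : G, d x y = 0 ↔ x = y) ∧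
      (∀ x y : G, d x y = d y x) ∧
      (∀ x y z : G, d x z ≤ d x y + d y z) ∧
      (∀ g x y : G, d (g * x) (g * y) = d x y) ∧
      (∀ s : Set G, IsOpen s ↔ ∀ x ∈ s, ∃ ε > 0, {y : G | d y x < ε} ⊆ s) ∧
      ({x : G | d x 1 < 1} = U) ∧
      (∀ n : ℕ, 1 ≤ n → {x : G | d x 1 < (n : ℝ)} ⊆ U ^ (2 * n - 1)) ∧
      (∀ r : ℝ, IsCompact {x : G | d x 1 ≤ r}) := by
  classical
  -- basic facts about δ
  have hδnn : ∀ x y : G, 0 ≤ δ x y := by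
    intro x y
    have e : δ x x = 0 := (h0 x x).2 rfl
    have h1 := htri x y x
    rw [e, hsymm y x] at h1
    linarith
  have hδ1 : δ 1 1 = 0 := (h0 1 1).2 rfl
  have hδ1inv : ∀ g : G, δ g⁻¹ 1 = δ g 1 := by
    intro g
    have h1 := hinv g⁻¹ 1 g
    rw [mul_one, inv_mul_cancel] at h1
    rw [h1, hsymm]
  have hδmul : ∀ g h : G, δ (g * h) 1 ≤ δ g 1 + δ h 1 := by
    intro g h
    have h1 := htri (g * h) g 1
    have h2 : δ (g * h) g = δ h 1 := by
      have := hinv g h 1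
      rw [mul_one] at this
      exact this
    linarith
  have hUiff : ∀ g : G, g ∈ U ↔ δ g 1 < 1 := by intro g; rw [hU]; exact Iff.rfl
  have h1U : (1 : G) ∈ U := (hUiff 1).2 (by rw [hδ1]; norm_num)
  have hUinv : ∀ g ∈ U, g⁻¹ ∈ U := fun g hg =>
    (hUiff _).2 (by rw [hδ1inv]; exact (hUiff g).1 hg)
  have hpowinv : ∀ (k : ℕ) (g : G), g ∈ U ^ k → g⁻¹ ∈ U ^ k := by
    intro k
    induction k with
    | zero => intro g hg; simp only [pow_zero, Set.mem_one] at hg ⊢; simp [hg]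
    | succ k ih =>
      intro g hg
      rw [pow_succ] at hg
      rcases Set.mem_mul.1 hg with ⟨a, ha, b, hb, rfl⟩
      rw [pow_succ', mul_inv_rev]
      exact Set.mul_mem_mul (hUinv b hb) (ih a ha)
  -- the weight function
  set ℓ : G → ℕ := fun g => Nat.find (hUgen g) with hℓdef
  have hℓ1 : ∀ g : G, 1 ≤ ℓ g ∧ g ∈ U ^ (ℓ g) := fun g => Nat.find_spec (hUgen g)
  have hℓle : ∀ (g : G) (k : ℕ), 1 ≤ k → g ∈ U ^ k → ℓ g ≤ k := fun g k h1 h2 =>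
    Nat.find_le ⟨h1, h2⟩
  set w : G → ℝ := fun g => if g ∈ U then δ g 1 else (ℓ g : ℝ) with hwdef
  have hwU : ∀ g ∈ U, w g = δ g 1 := fun g hg => if_pos hg
  have hwnotU : ∀ g ∉ U, w g = (ℓ g : ℝ) := fun g hg => if_neg hg
  have hwnn : ∀ g : G, 0 ≤ w g := by
    intro g
    by_cases h : g ∈ U
    · rw [hwU g h]; exact hδnn g 1
    · rw [hwnotU g h]; positivity
  have hw1le : ∀ g ∉ U, (1 : ℝ) ≤ w g := by
    intro g hg
    rw [hwnotU g hg]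
    exact_mod_cast (hℓ1 g).1
  have hsmall : ∀ g : G, (w g < 1 ∨ δ g 1 < 1) → w g = δ g 1 := by
    intro g h
    by_cases hg : g ∈ U
    · exact hwU g hg
    · exfalso
      rcases h with h | h
      · exact absurd h (not_lt.2 (hw1le g hg))
      · exact hg ((hUiff g).2 h)
  have hwinv : ∀ g : G, w g⁻¹ = w g := by
    intro g
    by_cases hg : g ∈ U
    · rw [hwU _ (hUinv g hg), hwU g hg, hδ1inv]
    · have hg' : g⁻¹ ∉ U := fun hc => hg (by simpa using hUinv _ hc)
      rw [hwnotU _ hg', hwnotU g hg]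
      norm_cast
      apply le_antisymm
      · exact hℓle _ _ (hℓ1 g).1 (hpowinv _ g (hℓ1 g).2)
      · have := hℓle _ _ (hℓ1 g⁻¹).1 (hpowinv _ g⁻¹ (hℓ1 g⁻¹).2)
        simpa using this
  have hA := stmt7_mergeA δ w hδ1 hwnn hδmul hsmall
  have hsplit : ∀ g ∉ U, ∃ M : List G, (∀ x ∈ M, x ∈ U) ∧ M.prod = g ∧
      ((M.length : ℝ) ≤ w g) := by
    intro g hg
    obtain ⟨f, hf⟩ := Set.mem_pow.1 (hℓ1 g).2
    refine ⟨List.ofFn fun i => (f i : G), ?_, hf, ?_⟩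
    · intro x hx
      rcases List.mem_ofFn.1 hx with ⟨i, rfl⟩
      exact (f i).2
    · rw [hwnotU g hg]
      simp
  have hB := stmt7_expand δ U w (fun g => hδnn g 1) hUiff hwU hsplit
  have hC := stmt7_mergeC δ U h1U hUiff hδmul
  have hBC : ∀ (L : List G) (n : ℕ), 1 ≤ n → (L.map w).sum < (n : ℝ) →
      L.prod ∈ U ^ (2 * n - 1) := by
    intro L n hn hs
    obtain ⟨P, hP, hPp, hPs⟩ := hB L
    rw [← hPp]
    exact hC P n hn hP (lt_of_le_of_lt hPs hs)
  -- the distance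
  set S : G → Set ℝ := fun g => {s | ∃ L : List G, L.prod = g ∧ (L.map w).sum = s} with hSdef
  have hsumnn : ∀ L : List G, 0 ≤ (L.map w).sum := fun L =>
    List.sum_nonneg (by rintro x hx; rcases List.mem_map.1 hx with ⟨y, -, rfl⟩; exact hwnn y)
  have hSne : ∀ g : G, (S g).Nonempty := fun g => ⟨(([g]).map w).sum, [g], by simp, rfl⟩
  have hSbdd : ∀ g : G, BddBelow (S g) := fun g => ⟨0, by rintro s ⟨L, -, rfl⟩; exact hsumnn L⟩
  set D : G → ℝ := fun g => sInf (S g) with hDdef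
  have hDnn : ∀ g : G, 0 ≤ D g := fun g =>
    le_csInf (hSne g) (by rintro s ⟨L, -, rfl⟩; exact hsumnn L)
  have hDlew : ∀ g : G, D g ≤ w g := fun g => csInf_le (hSbdd g) ⟨[g], by simp, by simp⟩
  have hD1 : D 1 = 0 := le_antisymm (csInf_le (hSbdd 1) ⟨[], by simp, by simp⟩) (hDnn 1)
  have hDlt : ∀ (g : G) (r : ℝ), D g < r → ∃ L : List G, L.prod = g ∧ (L.map w).sum < r := by
    intro g r h
    obtain ⟨s, ⟨L, hL, rfl⟩, hlt⟩ := (csInf_lt_iff (hSbdd g) (hSne g)).1 h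
    exact ⟨L, hL, hlt⟩
  have hDmul : ∀ g h : G, D (g * h) ≤ D g + D h := by
    intro g h
    apply le_of_forall_pos_le_add
    intro ε hε
    obtain ⟨L1, hL1, hs1⟩ := hDlt g (D g + ε / 2) (by linarith)
    obtain ⟨L2, hL2, hs2⟩ := hDlt h (D h + ε / 2) (by linarith)
    have hmem : ((L1 ++ L2).map w).sum ∈ S (g * h) :=
      ⟨L1 ++ L2, by rw [List.prod_append, hL1, hL2], rfl⟩
    have hle := csInf_le (hSbdd (g * h)) hmem
    rw [List.map_append, List.sum_append] at hle
    calc D (g * h) ≤ (L1.map w).sum + (L2.map w).sum := hle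
    _ ≤ D g + D h + ε := by linarith
  have hDinvle : ∀ g : G, D g⁻¹ ≤ D g := by
    intro g
    apply csInf_le_csInf (hSbdd _) (hSne g)
    rintro s ⟨L, hL, rfl⟩
    refine ⟨(L.map fun x => x⁻¹).reverse, ?_, ?_⟩
    · rw [← List.prod_inv_reverse, hL]
    · rw [List.map_reverse, List.sum_reverse, List.map_map]
      congr 1
      apply List.map_congr_left
      intro x _
      exact hwinv x
  have hDinv : ∀ g : G, D g⁻¹ = D g := fun g =>
    le_antisymm (hDinvle g) (by simpa using hDinvle g⁻¹)
  have hDδ : ∀ (g : G) (ε : ℝ), ε ≤ 1 → (D g < ε ↔ δ g 1 < ε) := by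
    intro g ε hε
    constructor
    · intro h
      obtain ⟨L, hL, hs⟩ := hDlt g ε h
      have := hA L (lt_of_lt_of_le hs hε)
      rw [hL] at this
      linarith
    · intro h
      have hgU : g ∈ U := (hUiff g).2 (lt_of_lt_of_le h hε)
      calc D g ≤ w g := hDlew g
      _ = δ g 1 := hwU g hgU
      _ < ε := h
  have hrel : ∀ x y : G, δ (y⁻¹ * x) 1 = δ y x := by
    intro x y
    have h1 := hinv y⁻¹ x y
    rw [inv_mul_cancel] at h1
    rw [h1, hsymm]
  -- the characterization of open sets via D
  have hgend : ∀ s : Set G, IsOpen s ↔ ∀ x ∈ s, ∃ ε > 0, {y : G | D (y⁻¹ * x) < ε} ⊆ s := by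
    intro s
    rw [hgen s]
    constructor
    · intro h x hx
      obtain ⟨ε, hε, hball⟩ := h x hx
      refine ⟨min ε 1, lt_min hε one_pos, ?_⟩
      intro y hy
      apply hball
      have h1 : δ (y⁻¹ * x) 1 < min ε 1 := (hDδ _ _ (min_le_right ε 1)).1 hy
      rw [hrel] at h1
      exact lt_of_lt_of_le h1 (min_le_left ε 1)
    · intro h x hx
      obtain ⟨ε, hε, hball⟩ := h x hx
      refine ⟨min ε 1, lt_min hε one_pos, ?_⟩
      intro y hy
      apply hball
      have h1 : δ (y⁻¹ * x) 1 < min ε 1 := by rw [hrel]; exact hy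
      exact lt_of_lt_of_le ((hDδ _ _ (min_le_right ε 1)).2 h1) (min_le_left ε 1)
  have hball : ∀ (x : G) (n : ℕ), 1 ≤ n → D x⁻¹ < (n : ℝ) → x ∈ U ^ (2 * n - 1) := by
    intro x n hn hx
    obtain ⟨L, hL, hs⟩ := hDlt x⁻¹ n hx
    have := hBC L n hn hs
    rw [hL] at this
    simpa using hpowinv _ _ this
  refine ⟨fun x y => D (x⁻¹ * y), ?_, ?_, ?_, ?_, hgend, ?_, ?_, ?_⟩
  · -- zero iff equal
    intro x y
    show D (x⁻¹ * y) = 0 ↔ x = y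
    constructor
    · intro h
      have hz : δ (x⁻¹ * y) 1 = 0 := by
        apply le_antisymm _ (hδnn _ _)
        apply le_of_forall_pos_le_add
        intro ε hε
        have hD : D (x⁻¹ * y) < min ε 1 := by rw [h]; exact lt_min hε one_pos
        have := (hDδ _ _ (min_le_right ε 1)).1 hD
        have h2 := min_le_left ε 1
        linarith
      exact inv_mul_eq_one.1 ((h0 _ 1).1 hz)
    · rintro rfl
      show D (x⁻¹ * x) = 0
      rw [inv_mul_cancel]
      exact hD1
  · -- symmetry
    intro x y
    show D (x⁻¹ * y) = D (y⁻¹ * x)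
    rw [show y⁻¹ * x = (x⁻¹ * y)⁻¹ by group, hDinv]
  · -- triangle
    intro x y z
    show D (x⁻¹ * z) ≤ D (x⁻¹ * y) + D (y⁻¹ * z)
    rw [show x⁻¹ * z = (x⁻¹ * y) * (y⁻¹ * z) by group]
    exact hDmul _ _
  · -- left invariance
    intro g x y
    show D ((g * x)⁻¹ * (g * y)) = D (x⁻¹ * y)
    rw [show (g * x)⁻¹ * (g * y) = x⁻¹ * y by group]
  · -- unit ball
    ext x
    simp only [Set.mem_setOf_eq, mul_one]
    rw [hDδ x⁻¹ 1 le_rfl, hδ1inv, ← hUiff]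
  · -- balls inside powers
    intro n hn x hx
    simp only [Set.mem_setOf_eq, mul_one] at hx
    exact hball x n hn hx
  · -- properness
    intro r
    by_cases hr : r < 0
    · have he : {x : G | D (x⁻¹ * 1) ≤ r} = ∅ := by
        apply Set.eq_empty_iff_forall_notMem.2
        intro x hx
        simp only [Set.mem_setOf_eq, mul_one] at hx
        linarith [hDnn x⁻¹]
      rw [he]
      exact isCompact_empty
    · push_neg at hr
      set n : ℕ := ⌊r⌋₊ + 1 with hn
      have hn1 : 1 ≤ n := by omega
      have hrn : r < (n : ℝ) := by
        have := Nat.lt_floor_add_one r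
        push_cast [hn]
        linarith
      have hsub : {x : G | D (x⁻¹ * 1) ≤ r} ⊆ (closure U) ^ (2 * n - 1) := by
        intro x hx
        simp only [Set.mem_setOf_eq, mul_one] at hx
        have hx' : D x⁻¹ < (n : ℝ) := lt_of_le_of_lt hx hrn
        exact Set.pow_subset_pow_left subset_closure (hball x n hn1 hx')
      have hclosed : IsClosed {x : G | D (x⁻¹ * 1) ≤ r} := by
        rw [← isOpen_compl_iff, hgend]
        intro x hx
        simp only [Set.mem_compl_iff, Set.mem_setOf_eq, mul_one, not_le] at hx
        refine ⟨D x⁻¹ - r, by linarith, ?_⟩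
        intro y hy
        simp only [Set.mem_setOf_eq] at hy
        simp only [Set.mem_compl_iff, Set.mem_setOf_eq, mul_one, not_le]
        have h1 : D x⁻¹ ≤ D (x⁻¹ * y) + D y⁻¹ := by
          have := hDmul (x⁻¹ * y) y⁻¹
          rw [show x⁻¹ * y * y⁻¹ = x⁻¹ by group] at this
          exact this
        have h2 : D (x⁻¹ * y) < D x⁻¹ - r := by
          rw [show x⁻¹ * y = (y⁻¹ * x)⁻¹ by group, hDinv]
          exact hy
        linarith
      have hcpt : ∀ k : ℕ, IsCompact ((closure U) ^ k) := by
        intro k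
        induction k with
        | zero => rw [pow_zero]; exact Set.finite_one.isCompact
        | succ k ih =>
          rw [pow_succ]
          exact ih.mul hUcpt
      exact IsCompact.of_isClosed_subset (hcpt (2 * n - 1)) hclosed hsub
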